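/- For a valuation μ on A and f : A → ℝ_l⁺, define s_{f,m,n} = (1/m) ∑_{i=1}^{mn} μ([f > i/m]) where [f > q] = {x ∈ A | q < f(x)}. If m divides m′ and n ≤ n′ then s_{f,m,n} ≤ s_{f,m′,n′}; consequently the family (s_{f,m,n})_{m,n ≥ 1} is directed. -/

import Mathlib

/-- The initial σ-frame `𝕊`, as the least subset of the propositions `Ω = Prop`
containing `False` and `True` and closed under joins of increasing ω-chains
(equivalently, the image of the free ω-cpo completion of `𝔹 = {⊥ ≤ ⊤}` in `Ω`). -/
inductive InS : Prop → Prop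
  | bot : InS False
  | top : InS True
  | sup (c : ℕ → Prop) (mono : ∀ n, c n → c (n + 1)) (h : ∀ n, InS (c n)) :
      InS (∃ n, c n)

theorem InS.of_decidable (p : Prop) [Decidable p] : InS p := by
  by_cases h : p
  · rw [eq_true h]; exact InS.top
  · rw [eq_false h]; exact InS.bot

/-- A map between preorders is ω-(Scott-)continuous if it is monotone and preserves
least upper bounds of enumerable directed subsets. -/
def OmegaContinuous {C D : Type} [Preorder C] [Preorder D] (f : C → D) : Prop :=
  Monotone f ∧
    ∀ (U : Set C) (x : C), U.Countable → U.Nonempty → DirectedOn (· ≤ ·) U →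
      IsLUB U x → IsLUB (f '' U) (f x)

/-- A preorder is an ω-cpo if every enumerable directed subset has a least upper bound. -/
def IsOmegaCPO (C : Type) [Preorder C] : Prop :=
  ∀ U : Set C, U.Countable → U.Nonempty → DirectedOn (· ≤ ·) U → ∃ x, IsLUB U x

/-- A cover-preserving monotone map from an ω-cpo presentation `(P, Cov)` into an
ordered set: the image of each cover has a least upper bound above the image of the
covered element. -/
def CovMorphism {P C : Type} [Preorder P] [Preorder C]
    (Cov : P → Set P → Prop) (f : P → C) : Prop :=
  Monotone f ∧ ∀ p U, Cov p U → ∃ s, IsLUB (f '' U) s ∧ f p ≤ s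

/-- `(Pω, η)` is the free ω-cpo completion of the ω-cpo presentation `(P, Cov)`:
`Pω` is an ω-cpo, `η` is a cover-preserving monotone map, and every cover-preserving
monotone map from `P` into an ω-cpo extends uniquely to an ω-continuous map on `Pω`. -/
structure IsFreeOmegaCompletion {P : Type} [Preorder P] (Cov : P → Set P → Prop)
    (Pω : Type) [PartialOrder Pω] (η : P → Pω) : Prop where
  cpo : IsOmegaCPO Pω
  eta_morph : CovMorphism Cov η
  extend_unique : ∀ (C : Type) [PartialOrder C], IsOmegaCPO C →
    ∀ f : P → C, CovMorphism Cov f →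
      ∃! g : Pω → C, OmegaContinuous g ∧ ∀ p, g (η p) = f p

/-- The Sierpinski space as a subtype of the propositions, ordered by implication. -/
abbrev Sierp := {p : Prop // InS p}

theorem InS.or {p q : Prop} (hp : InS p) (hq : InS q) : InS (p ∨ q) := by
  induction hp with
  | bot => simp only [false_or]; exact hq
  | top => simp only [true_or]; exact InS.top
  | sup c mono h ih =>
      have e : ((∃ n, c n) ∨ q) = (∃ n, c n ∨ q) := propext <| by
        constructor
        · rintro (⟨n, hn⟩ | hq')
          · exact ⟨n, Or.inl hn⟩
          · exact ⟨0, Or.inr hq'⟩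
        · rintro ⟨n, hn | hq'⟩
          · exact Or.inl ⟨n, hn⟩
          · exact Or.inr hq'
      rw [e]
      exact InS.sup _ (fun n => Or.imp_left (mono n)) ih

theorem InS.and {p q : Prop} (hp : InS p) (hq : InS q) : InS (p ∧ q) := by
  induction hp with
  | bot => simp only [false_and]; exact InS.bot
  | top => simp only [true_and]; exact hq
  | sup c mono h ih =>
      have e : ((∃ n, c n) ∧ q) = (∃ n, c n ∧ q) := propext <| by
        constructor
        · rintro ⟨⟨n, hn⟩, hq'⟩
          exact ⟨n, hn, hq'⟩
        · rintro ⟨n, hn, hq'⟩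
          exact ⟨⟨n, hn⟩, hq'⟩
      rw [e]
      exact InS.sup _ (fun n => And.imp_left (mono n)) ih

theorem InS.exists_nat (p : ℕ → Prop) (h : ∀ n, InS (p n)) : InS (∃ n, p n) := by
  have key : ∀ m, InS (∃ k, k ≤ m ∧ p k) := by
    intro m
    induction m with
    | zero =>
        have e : (∃ k, k ≤ 0 ∧ p k) = p 0 := propext <| by
          constructor
          · rintro ⟨k, hk, hp⟩
            rwa [Nat.le_zero.mp hk] at hp
          · exact fun hp => ⟨0, le_refl _, hp⟩
        rw [e]; exact h 0
    | succ m ih =>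
        have e : (∃ k, k ≤ m + 1 ∧ p k) = ((∃ k, k ≤ m ∧ p k) ∨ p (m + 1)) :=
          propext <| by
            constructor
            · rintro ⟨k, hk, hp⟩
              rcases Nat.eq_or_lt_of_le hk with rfl | hk'
              · exact Or.inr hp
              · exact Or.inl ⟨k, Nat.lt_succ_iff.mp hk', hp⟩
            · rintro (⟨k, hk, hp⟩ | hp)
              · exact ⟨k, hk.trans (Nat.le_succ m), hp⟩
              · exact ⟨m + 1, le_refl _, hp⟩
        rw [e]; exact ih.or (h (m + 1))
  have e : (∃ n, p n) = (∃ m, ∃ k, k ≤ m ∧ p k) := propext <| by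
    constructor
    · rintro ⟨n, hn⟩
      exact ⟨n, n, le_refl _, hn⟩
    · rintro ⟨m, k, _, hk⟩
      exact ⟨k, hk⟩
  rw [e]
  exact InS.sup _ (fun m ⟨k, hk, hp⟩ => ⟨k, hk.trans (Nat.le_succ m), hp⟩) key

def Sierp.botS : Sierp := ⟨False, InS.bot⟩
def Sierp.topS : Sierp := ⟨True, InS.top⟩
def Sierp.or (s t : Sierp) : Sierp := ⟨s.1 ∨ t.1, s.2.or t.2⟩
def Sierp.and (s t : Sierp) : Sierp := ⟨s.1 ∧ t.1, s.2.and t.2⟩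

/-- Enumerable joins in the Sierpinski space. -/
def Sierp.joinSeq (s : ℕ → Sierp) : Sierp :=
  ⟨∃ n, (s n).1, InS.exists_nat _ (fun n => (s n).2)⟩

/-- A lower real: an `𝕊`-valued, inhabited, rounded, downward-closed cut of rationals. -/
structure LowerReal where
  cut : ℚ → Prop
  inS : ∀ q, InS (cut q)
  inhab : ∃ q, cut q
  rounded : ∀ q, cut q → ∃ q', q < q' ∧ cut q'
  lower : ∀ q q', q < q' → cut q' → cut q

instance : Preorder LowerReal where
  le L₁ L₂ := ∀ q, L₁.cut q → L₂.cut q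
  le_refl _ _ h := h
  le_trans _ _ _ h₁ h₂ q hq := h₂ q (h₁ q hq)

/-- The lower real associated to a rational number. -/
def ratLR (q : ℚ) : LowerReal where
  cut p := p < q
  inS _ := InS.of_decidable _
  inhab := ⟨q - 1, by linarith⟩
  rounded p hp := ⟨(p + q) / 2, by constructor <;> linarith⟩
  lower _ _ h h' := lt_trans h h'

/-- The non-negative rationals. -/
abbrev QPlus := {q : ℚ // 0 ≤ q}

/-- The non-negative lower reals `ℝ_l⁺`. -/
abbrev NNLowerReal := {L : LowerReal // ∀ q : ℚ, q < 0 → L.cut q}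

/-- The non-negative lower real associated to a non-negative rational. -/
def ratNN (q : QPlus) : NNLowerReal :=
  ⟨ratLR q.1, fun _ hp => lt_of_lt_of_le hp q.2⟩

def zeroNN : NNLowerReal := ratNN ⟨0, le_refl 0⟩
def oneNN : NNLowerReal := ratNN ⟨1, by norm_num⟩

/-- `r : 𝕊 → ℝ_l⁺`, the unique ω-continuous map with `r ⊥ = 0` and `r ⊤ = 1`;
`indicatorLR (U a)` is the real indicator function `𝟙_U` of an open `U`. -/
def indicatorLR (s : Sierp) : NNLowerReal :=
  ⟨{ cut := fun q => q < 0 ∨ (s.1 ∧ q < 1)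
     inS := fun q => by
       show InS (q < 0 ∨ (s.1 ∧ q < 1))
       by_cases h0 : q < 0
       · rw [eq_true (Or.inl h0 : q < 0 ∨ (s.1 ∧ q < 1))]; exact InS.top
       · rw [eq_false h0, false_or]
         by_cases h1 : q < 1
         · rw [eq_true h1, and_true]; exact s.2
         · rw [eq_false h1, and_false]; exact InS.bot
     inhab := ⟨-1, Or.inl (by norm_num)⟩
     rounded := fun q hq => by
       rcases hq with h | ⟨hs, h1⟩
       · exact ⟨q / 2, by linarith, Or.inl (by linarith)⟩
       · exact ⟨(q + 1) / 2, by
           constructor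
           · linarith
           · exact Or.inr ⟨hs, by linarith⟩⟩
     lower := fun q q' h hq' => by
       rcases hq' with h' | ⟨hs, h1⟩
       · exact Or.inl (lt_trans h h')
       · by_cases h0 : q < 0
         · exact Or.inl h0
         · exact Or.inr ⟨hs, lt_trans h h1⟩ },
   fun q hq => Or.inl hq⟩

/-- Specification of the addition on the non-negative lower reals: ω-continuous in
each argument and extending addition of non-negative rationals. -/
def AddSpecNN (add : NNLowerReal → NNLowerReal → NNLowerReal) : Prop :=
  (∀ L, OmegaContinuous (add L)) ∧ (∀ L, OmegaContinuous (fun x => add x L)) ∧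
    ∀ q q' : QPlus, add (ratNN q) (ratNN q') = ratNN ⟨q.1 + q'.1, add_nonneg q.2 q'.2⟩

/-- Specification of the multiplication on the non-negative lower reals: ω-continuous
in each argument and extending multiplication of non-negative rationals. -/
def MulSpecNN (mul : NNLowerReal → NNLowerReal → NNLowerReal) : Prop :=
  (∀ L, OmegaContinuous (mul L)) ∧ (∀ L, OmegaContinuous (fun x => mul x L)) ∧
    ∀ q q' : QPlus, mul (ratNN q) (ratNN q') = ratNN ⟨q.1 * q'.1, mul_nonneg q.2 q'.2⟩

/-- A lower integral on `A`: an ω-continuous, bottom-preserving, additive map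
`(A → ℝ_l⁺) → ℝ_l⁺`. -/
def IsLowerIntegral {A : Type} (add : NNLowerReal → NNLowerReal → NNLowerReal)
    (I : (A → NNLowerReal) → NNLowerReal) : Prop :=
  OmegaContinuous I ∧ I (fun _ => zeroNN) = zeroNN ∧
    ∀ f g : A → NNLowerReal, I (fun a => add (f a) (g a)) = add (I f) (I g)

/-- A valuation on `A`: an ω-continuous, bottom-preserving, modular map
`𝒪(A) = (A → 𝕊) → ℝ_l⁺`. -/
def IsValuation {A : Type} (add : NNLowerReal → NNLowerReal → NNLowerReal)
    (μ : (A → Sierp) → NNLowerReal) : Prop :=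
  OmegaContinuous μ ∧ μ (fun _ => Sierp.botS) = zeroNN ∧
    ∀ U V : A → Sierp,
      add (μ U) (μ V) =
        add (μ (fun a => (U a).or (V a))) (μ (fun a => (U a).and (V a)))

/-- The open subset `[f > q] = {x ∈ A | q < f x}` of `A`. -/
def openGT {A : Type} (f : A → NNLowerReal) (q : ℚ) : A → Sierp :=
  fun a => ⟨(f a).1.cut q, (f a).1.inS q⟩

/-- The approximating simple sum `s_{f,m,n} = (1/m) ∑_{i=1}^{mn} μ([f > i/m])`. -/
def sFMN {A : Type} (add mul : NNLowerReal → NNLowerReal → NNLowerReal)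
    (μ : (A → Sierp) → NNLowerReal) (f : A → NNLowerReal) (m n : ℕ) : NNLowerReal :=
  mul (ratNN ⟨1 / (m : ℚ), by positivity⟩)
    ((List.range (m * n)).foldr
      (fun i acc => add (μ (openGT f (((i : ℚ) + 1) / (m : ℚ)))) acc) zeroNN)

section SFMNAux

variable (add mul : NNLowerReal → NNLowerReal → NNLowerReal)

private lemma nn_zero_le (x : NNLowerReal) : zeroNN ≤ x := fun q hq => x.2 q hq

private lemma ratNN_le_ratNN {a b : QPlus} (h : a.1 ≤ b.1) : ratNN a ≤ ratNN b :=
  fun p hp => lt_of_lt_of_le hp h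

private lemma ratNN_le {a : QPlus} {x : NNLowerReal} (h : x.1.cut a.1) : ratNN a ≤ x :=
  fun p hp => x.1.lower p a.1 hp h

private def ratSet (x : NNLowerReal) : Set NNLowerReal :=
  insert (ratNN ⟨0, le_refl 0⟩) {y | ∃ q : QPlus, x.1.cut q.1 ∧ y = ratNN q}

private lemma ratSet_countable (x : NNLowerReal) : (ratSet x).Countable := by
  apply Set.Countable.insert
  have h : {y | ∃ q : QPlus, x.1.cut q.1 ∧ y = ratNN q} ⊆ Set.range ratNN := by
    rintro y ⟨q, _, rfl⟩; exact ⟨q, rfl⟩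
  exact (Set.countable_range ratNN).mono h

private lemma ratSet_nonempty (x : NNLowerReal) : (ratSet x).Nonempty :=
  ⟨_, Set.mem_insert _ _⟩

private lemma ratSet_directed (x : NNLowerReal) : DirectedOn (· ≤ ·) (ratSet x) := by
  rintro a ha b hb
  rcases ha with rfl | ⟨qa, hqa, rfl⟩ <;> rcases hb with rfl | ⟨qb, hqb, rfl⟩
  · exact ⟨_, Set.mem_insert _ _, le_refl _, le_refl _⟩
  · exact ⟨ratNN qb, Or.inr ⟨qb, hqb, rfl⟩, ratNN_le_ratNN qb.2, le_refl _⟩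
  · exact ⟨ratNN qa, Or.inr ⟨qa, hqa, rfl⟩, le_refl _, ratNN_le_ratNN qa.2⟩
  · refine ⟨ratNN ⟨max qa.1 qb.1, le_trans qa.2 (le_max_left _ _)⟩,
      Or.inr ⟨_, ?_, rfl⟩, ratNN_le_ratNN (le_max_left _ _), ratNN_le_ratNN (le_max_right _ _)⟩
    show x.1.cut (max qa.1 qb.1)
    rcases le_total qa.1 qb.1 with h | h
    · rw [max_eq_right h]; exact hqb
    · rw [max_eq_left h]; exact hqa

private lemma isLUB_ratSet (x : NNLowerReal) : IsLUB (ratSet x) x := by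
  constructor
  · rintro y hy
    rcases hy with rfl | ⟨q, hq, rfl⟩
    · exact nn_zero_le x
    · exact ratNN_le hq
  · intro b hb p hp
    by_cases h0 : p < 0
    · exact hb (Set.mem_insert _ _) p h0
    · obtain ⟨p', hpp', hp'⟩ := x.1.rounded p hp
      have hp'0 : (0 : ℚ) ≤ p' := le_trans (not_lt.1 h0) (le_of_lt hpp')
      exact hb (Or.inr ⟨⟨p', hp'0⟩, hp', rfl⟩) p hpp'

private lemma le_of_rat_le {g h : NNLowerReal → NNLowerReal}
    (hg : OmegaContinuous g) (hh : OmegaContinuous h)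
    (hr : ∀ q : QPlus, g (ratNN q) ≤ h (ratNN q)) : ∀ x, g x ≤ h x := by
  intro x
  have hlub := hg.2 (ratSet x) x (ratSet_countable x) (ratSet_nonempty x)
    (ratSet_directed x) (isLUB_ratSet x)
  apply hlub.2
  rintro y ⟨z, hz, rfl⟩
  have hzx : z ≤ x := (isLUB_ratSet x).1 hz
  rcases hz with rfl | ⟨q, _, rfl⟩
  · exact le_trans (hr ⟨0, le_refl 0⟩) (hh.1 hzx)
  · exact le_trans (hr q) (hh.1 hzx)

private lemma cont_id : OmegaContinuous (fun x : NNLowerReal => x) := by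
  refine ⟨monotone_id, ?_⟩
  intro U x _ _ _ h
  simpa using h

private lemma cont_const (c : NNLowerReal) : OmegaContinuous (fun _ : NNLowerReal => c) := by
  refine ⟨monotone_const, ?_⟩
  intro U x _ hne _ _
  rw [Set.Nonempty.image_const hne]
  exact isLUB_singleton

private lemma cont_comp {g f : NNLowerReal → NNLowerReal}
    (hg : OmegaContinuous g) (hf : OmegaContinuous f) :
    OmegaContinuous (fun x => g (f x)) := by
  refine ⟨hg.1.comp hf.1, ?_⟩
  intro U x hc hne hd hl
  have hdir : DirectedOn (· ≤ ·) (f '' U) := by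
    rintro _ ⟨u, hu, rfl⟩ _ ⟨v, hv, rfl⟩
    obtain ⟨w, hw, h1, h2⟩ := hd u hu v hv
    exact ⟨f w, ⟨w, hw, rfl⟩, hf.1 h1, hf.1 h2⟩
  have h2 := hg.2 (f '' U) (f x) (hc.image f) (hne.image f) hdir (hf.2 U x hc hne hd hl)
  rw [← Set.image_comp] at h2
  exact h2

private lemma cont_diag {F : NNLowerReal → NNLowerReal → NNLowerReal}
    (h1 : ∀ y, OmegaContinuous (fun x => F x y))
    (h2 : ∀ x, OmegaContinuous (F x)) :
    OmegaContinuous (fun x => F x x) := by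
  constructor
  · intro a b hab
    exact le_trans ((h1 a).1 hab) ((h2 b).1 hab)
  · intro U x hc hne hd hl
    constructor
    · rintro _ ⟨u, hu, rfl⟩
      have hux : u ≤ x := hl.1 hu
      exact le_trans ((h1 u).1 hux) ((h2 x).1 hux)
    · intro b hb
      have hx1 := (h1 x).2 U x hc hne hd hl
      apply hx1.2
      rintro _ ⟨u, hu, rfl⟩
      have hx2 := (h2 u).2 U x hc hne hd hl
      apply hx2.2
      rintro _ ⟨v, hv, rfl⟩
      obtain ⟨w, hw, huw, hvw⟩ := hd u hu v hv
      exact le_trans (le_trans ((h1 v).1 huw) ((h2 w).1 hvw)) (hb ⟨w, hw, rfl⟩)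

private lemma cont_comb {F : NNLowerReal → NNLowerReal → NNLowerReal}
    (h1 : ∀ y, OmegaContinuous (fun x => F x y))
    (h2 : ∀ x, OmegaContinuous (F x)) {g h : NNLowerReal → NNLowerReal}
    (hg : OmegaContinuous g) (hh : OmegaContinuous h) :
    OmegaContinuous (fun x => F (g x) (h x)) :=
  cont_diag (F := fun u v => F (g u) (h v))
    (fun y => cont_comp (h1 (h y)) hg)
    (fun x => cont_comp (h2 (g x)) hh)

end SFMNAux

section SFMNAux2

variable {add mul : NNLowerReal → NNLowerReal → NNLowerReal}

private lemma ratNN_eq {a b : QPlus} (h : a.1 = b.1) : ratNN a = ratNN b :=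
  congrArg ratNN (Subtype.ext h)

private lemma add_mono (hadd : AddSpecNN add) {a a' b b' : NNLowerReal}
    (h1 : a ≤ a') (h2 : b ≤ b') : add a b ≤ add a' b' :=
  le_trans ((hadd.2.1 b).1 h1) ((hadd.1 a').1 h2)

private lemma mul_mono_right (hmul : MulSpecNN mul) (c : NNLowerReal)
    {x y : NNLowerReal} (h : x ≤ y) : mul c x ≤ mul c y := (hmul.1 c).1 h

-- x ≤ add x zeroNN
private lemma le_add_zero (hadd : AddSpecNN add) (x : NNLowerReal) :
    x ≤ add x zeroNN := by
  refine le_of_rat_le cont_id (hadd.2.1 zeroNN) (fun q => ?_) x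
  have h : add (ratNN q) zeroNN = ratNN ⟨q.1 + 0, add_nonneg q.2 (le_refl 0)⟩ :=
    hadd.2.2 q ⟨0, le_refl 0⟩
  rw [h]
  exact ratNN_le_ratNN (by simp)

-- add zeroNN x ≤ x
private lemma add_zero_le (hadd : AddSpecNN add) (x : NNLowerReal) :
    add zeroNN x ≤ x := by
  refine le_of_rat_le (hadd.1 zeroNN) cont_id (fun q => ?_) x
  have h : add zeroNN (ratNN q) = ratNN ⟨0 + q.1, add_nonneg (le_refl 0) q.2⟩ :=
    hadd.2.2 ⟨0, le_refl 0⟩ q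
  rw [h]
  exact ratNN_le_ratNN (by simp)

-- mul (ratNN 0) y ≤ zeroNN
private lemma mul_zero_rat_le (hmul : MulSpecNN mul) (y : NNLowerReal) :
    mul (ratNN ⟨0, le_refl 0⟩) y ≤ zeroNN := by
  refine le_of_rat_le (hmul.1 _) (cont_const zeroNN) (fun q => ?_) y
  have h : mul (ratNN ⟨0, le_refl 0⟩) (ratNN q) =
      ratNN ⟨0 * q.1, mul_nonneg (le_refl 0) q.2⟩ := hmul.2.2 ⟨0, le_refl 0⟩ q
  rw [h]
  exact ratNN_le_ratNN (by simp)

-- mul c zeroNN ≤ zeroNN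
private lemma mul_zero_le (hmul : MulSpecNN mul) (c : QPlus) :
    mul (ratNN c) zeroNN ≤ zeroNN := by
  have h : mul (ratNN c) zeroNN = ratNN ⟨c.1 * 0, mul_nonneg c.2 (le_refl 0)⟩ :=
    hmul.2.2 c ⟨0, le_refl 0⟩
  rw [h]
  exact ratNN_le_ratNN (by simp)

-- associativity (one direction)
private lemma add_assoc_le (hadd : AddSpecNN add) (x y z : NNLowerReal) :
    add (add x y) z ≤ add x (add y z) := by
  revert x
  refine le_of_rat_le
    (cont_comp (hadd.2.1 z) (hadd.2.1 y))
    (hadd.2.1 (add y z)) (fun p => ?_)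
  revert y
  refine le_of_rat_le
    (cont_comp (hadd.2.1 z) (hadd.1 (ratNN p)))
    (cont_comp (hadd.1 (ratNN p)) (hadd.2.1 z)) (fun q => ?_)
  rw [hadd.2.2 p q]
  revert z
  refine le_of_rat_le
    (hadd.1 _)
    (cont_comp (hadd.1 (ratNN p)) (hadd.1 (ratNN q))) (fun r => ?_)
  rw [hadd.2.2, hadd.2.2, hadd.2.2]
  exact ratNN_le_ratNN (le_of_eq (add_assoc p.1 q.1 r.1))

-- distributivity, both directions
private lemma mul_add_le (hadd : AddSpecNN add) (hmul : MulSpecNN mul)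
    (c : QPlus) (x y : NNLowerReal) :
    mul (ratNN c) (add x y) ≤ add (mul (ratNN c) x) (mul (ratNN c) y) := by
  revert x
  refine le_of_rat_le
    (cont_comp (hmul.1 (ratNN c)) (hadd.2.1 y))
    (cont_comp (hadd.2.1 (mul (ratNN c) y)) (hmul.1 (ratNN c))) (fun p => ?_)
  rw [hmul.2.2 c p]
  revert y
  refine le_of_rat_le
    (cont_comp (hmul.1 (ratNN c)) (hadd.1 (ratNN p)))
    (cont_comp (hadd.1 _) (hmul.1 (ratNN c))) (fun q => ?_)
  rw [hadd.2.2 p q, hmul.2.2, hmul.2.2, hadd.2.2]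
  exact ratNN_le_ratNN (le_of_eq (mul_add c.1 p.1 q.1))

private lemma mul_add_ge (hadd : AddSpecNN add) (hmul : MulSpecNN mul)
    (c : QPlus) (x y : NNLowerReal) :
    add (mul (ratNN c) x) (mul (ratNN c) y) ≤ mul (ratNN c) (add x y) := by
  revert x
  refine le_of_rat_le
    (cont_comp (hadd.2.1 (mul (ratNN c) y)) (hmul.1 (ratNN c)))
    (cont_comp (hmul.1 (ratNN c)) (hadd.2.1 y)) (fun p => ?_)
  rw [hmul.2.2 c p]
  revert y
  refine le_of_rat_le
    (cont_comp (hadd.1 _) (hmul.1 (ratNN c)))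
    (cont_comp (hmul.1 (ratNN c)) (hadd.1 (ratNN p))) (fun q => ?_)
  rw [hadd.2.2 p q, hmul.2.2, hmul.2.2, hadd.2.2]
  exact ratNN_le_ratNN (le_of_eq (mul_add c.1 p.1 q.1).symm)

-- mul (a+b) x ≤ add (mul a x) (mul b x)
private lemma mul_rat_add (hadd : AddSpecNN add) (hmul : MulSpecNN mul)
    (a b : QPlus) (x : NNLowerReal) :
    mul (ratNN ⟨a.1 + b.1, add_nonneg a.2 b.2⟩) x ≤
      add (mul (ratNN a) x) (mul (ratNN b) x) := by
  revert x
  refine le_of_rat_le (hmul.1 _)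
    (cont_comb (F := add) (fun y => hadd.2.1 y) (fun y => hadd.1 y)
      (hmul.1 (ratNN a)) (hmul.1 (ratNN b))) (fun p => ?_)
  rw [hmul.2.2, hmul.2.2, hmul.2.2, hadd.2.2]
  exact ratNN_le_ratNN (le_of_eq (add_mul a.1 b.1 p.1))

end SFMNAux2

section SFMNAux3

variable {add mul : NNLowerReal → NNLowerReal → NNLowerReal}

private def Sm (add : NNLowerReal → NNLowerReal → NNLowerReal)
    (g : ℕ → NNLowerReal) : ℕ → NNLowerReal
  | 0 => zeroNN
  | n + 1 => add (g 0) (Sm add (fun i => g (i + 1)) n)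

private lemma Sm_eq_foldr (g : ℕ → NNLowerReal) (n : ℕ) :
    Sm add g n = (List.range n).foldr (fun i acc => add (g i) acc) zeroNN := by
  induction n generalizing g with
  | zero => rfl
  | succ n ih =>
    rw [List.range_succ_eq_map, List.foldr_cons, List.foldr_map]
    show add (g 0) (Sm add (fun i => g (i + 1)) n) = _
    rw [ih (fun i => g (i + 1))]

private lemma Sm_congr {g g' : ℕ → NNLowerReal} {n : ℕ}
    (h : ∀ i < n, g i = g' i) : Sm add g n = Sm add g' n := by
  induction n generalizing g g' with
  | zero => rfl
  | succ n ih =>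
    show add (g 0) _ = add (g' 0) _
    rw [h 0 (Nat.succ_pos n), ih (fun i hi => h (i + 1) (by omega))]

private lemma Sm_mono_fn (hadd : AddSpecNN add) {g g' : ℕ → NNLowerReal} {n : ℕ}
    (h : ∀ i < n, g i ≤ g' i) : Sm add g n ≤ Sm add g' n := by
  induction n generalizing g g' with
  | zero => exact le_refl _
  | succ n ih =>
    exact add_mono hadd (h 0 (Nat.succ_pos n)) (ih (fun i hi => h (i + 1) (by omega)))

private lemma Sm_mono_len (hadd : AddSpecNN add) (g : ℕ → NNLowerReal) {n n' : ℕ}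
    (h : n ≤ n') : Sm add g n ≤ Sm add g n' := by
  induction n generalizing g n' with
  | zero => exact nn_zero_le _
  | succ n ih =>
    obtain ⟨n'', rfl⟩ : ∃ m, n' = m + 1 := ⟨n' - 1, by omega⟩
    exact add_mono hadd (le_refl _) (ih _ (by omega))

private lemma Sm_split_ge (hadd : AddSpecNN add) (g : ℕ → NNLowerReal) (a b : ℕ) :
    add (Sm add g a) (Sm add (fun i => g (a + i)) b) ≤ Sm add g (a + b) := by
  induction a generalizing g with
  | zero =>
    have e1 : (fun i => g (0 + i)) = g := funext fun i => congrArg g (Nat.zero_add i)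
    rw [e1, Nat.zero_add]
    exact add_zero_le hadd _
  | succ a ih =>
    have e : a + 1 + b = (a + b) + 1 := by omega
    rw [e]
    show add (add (g 0) _) _ ≤ add (g 0) (Sm add (fun i => g (i + 1)) (a + b))
    refine le_trans (add_assoc_le hadd _ _ _) (add_mono hadd (le_refl _) ?_)
    have e2 : (fun i => g (a + 1 + i)) = (fun i => (fun j => g (j + 1)) (a + i)) :=
      funext fun i => congrArg g (by omega)
    rw [e2]
    exact ih (fun j => g (j + 1))

-- replicate lemma
private lemma Sm_rep_ge (hadd : AddSpecNN add) (hmul : MulSpecNN mul)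
    (c : QPlus) (y : NNLowerReal) (k : ℕ) :
    mul (ratNN ⟨(k : ℚ) * c.1, mul_nonneg (by positivity) c.2⟩) y ≤
      Sm add (fun _ => mul (ratNN c) y) k := by
  induction k with
  | zero =>
    have h0 : ratNN ⟨((0 : ℕ) : ℚ) * c.1, mul_nonneg (by positivity) c.2⟩ =
        ratNN ⟨0, le_refl 0⟩ := ratNN_eq (by push_cast; ring)
    rw [h0]
    exact mul_zero_rat_le hmul y
  | succ k ih =>
    have h1 : ratNN (⟨((k + 1 : ℕ) : ℚ) * c.1, mul_nonneg (by positivity) c.2⟩ : QPlus) =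
        ratNN ⟨c.1 + (k : ℚ) * c.1,
          add_nonneg c.2 (mul_nonneg (by positivity) c.2)⟩ :=
      ratNN_eq (by push_cast; ring)
    rw [h1]
    refine le_trans
      (mul_rat_add hadd hmul c ⟨(k : ℚ) * c.1, mul_nonneg (by positivity) c.2⟩ y) ?_
    exact add_mono hadd (le_refl _) ih

-- pull scalar out / push in
private lemma Sm_mul_ge (hadd : AddSpecNN add) (hmul : MulSpecNN mul)
    (c : QPlus) (g : ℕ → NNLowerReal) (n : ℕ) :
    Sm add (fun i => mul (ratNN c) (g i)) n ≤ mul (ratNN c) (Sm add g n) := by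
  induction n generalizing g with
  | zero =>
    refine le_trans (le_refl zeroNN) ?_
    exact le_trans (nn_zero_le _) (le_refl _)
  | succ n ih =>
    show add (mul (ratNN c) (g 0)) _ ≤ mul (ratNN c) (add (g 0) _)
    refine le_trans (add_mono hadd (le_refl _) (ih (fun i => g (i + 1)))) ?_
    exact mul_add_ge hadd hmul c _ _

private lemma Sm_mul_le (hadd : AddSpecNN add) (hmul : MulSpecNN mul)
    (c : QPlus) (g : ℕ → NNLowerReal) (n : ℕ) :
    mul (ratNN c) (Sm add g n) ≤ Sm add (fun i => mul (ratNN c) (g i)) n := by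
  induction n generalizing g with
  | zero => exact mul_zero_le hmul c
  | succ n ih =>
    show mul (ratNN c) (add (g 0) _) ≤ add (mul (ratNN c) (g 0)) _
    refine le_trans (mul_add_le hadd hmul c _ _) ?_
    exact add_mono hadd (le_refl _) (ih (fun i => g (i + 1)))

-- grouping lemma
private lemma Sm_group (hadd : AddSpecNN add) (hmul : MulSpecNN mul)
    (c : QPlus) {k : ℕ} (hk : 0 < k) (N : ℕ) (h : ℕ → NNLowerReal) :
    Sm add (fun j => mul (ratNN ⟨(k : ℚ) * c.1, mul_nonneg (by positivity) c.2⟩) (h j)) N ≤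
      Sm add (fun i => mul (ratNN c) (h (i / k))) (k * N) := by
  induction N generalizing h with
  | zero => rw [Nat.mul_zero]; exact le_refl _
  | succ N ih =>
    have e : k * (N + 1) = k + k * N := by ring
    rw [e]
    show add (mul (ratNN ⟨(k:ℚ) * c.1, _⟩) (h 0)) _ ≤ _
    refine le_trans ?_ (Sm_split_ge hadd _ k (k * N))
    refine add_mono hadd ?_ ?_
    · refine le_trans (Sm_rep_ge hadd hmul c (h 0) k) (le_of_eq ?_)
      exact Sm_congr (fun i hi => by rw [Nat.div_eq_of_lt hi])
    · have e2 : (fun i => mul (ratNN c) (h ((k + i) / k))) =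
          (fun i => mul (ratNN c) ((fun j => h (j + 1)) (i / k))) := by
        funext i
        congr 1
        rw [Nat.add_comm k i, Nat.add_div_right i hk]
      refine le_trans (ih (fun j => h (j + 1))) (le_of_eq ?_)
      exact congrArg (fun gg => Sm add gg (k * N)) e2.symm

end SFMNAux3

private lemma sFMN_main_mono {A : Type}
    {add mul : NNLowerReal → NNLowerReal → NNLowerReal}
    (hadd : AddSpecNN add) (hmul : MulSpecNN mul)
    {μ : (A → Sierp) → NNLowerReal} (hμmono : Monotone μ) (f : A → NNLowerReal)
    {m k n n' : ℕ} (hm : 0 < m) (hk : 0 < k) (hn : n ≤ n') :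
    sFMN add mul μ f m n ≤ sFMN add mul μ f (m * k) n' := by
  have hm0 : (0 : ℚ) < (m : ℚ) := by exact_mod_cast hm
  have hk0 : (0 : ℚ) < (k : ℚ) := by exact_mod_cast hk
  set c1 : QPlus := ⟨1 / (m : ℚ), by positivity⟩ with hc1def
  set c' : QPlus := ⟨1 / ((m * k : ℕ) : ℚ), by positivity⟩ with hc'def
  set h : ℕ → NNLowerReal := fun j => μ (openGT f (((j : ℚ) + 1) / (m : ℚ))) with hhdef
  set g' : ℕ → NNLowerReal :=
    fun i => μ (openGT f (((i : ℚ) + 1) / ((m * k : ℕ) : ℚ))) with hg'def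
  have e1 : sFMN add mul μ f m n = mul (ratNN c1) (Sm add h (m * n)) := by
    unfold sFMN
    rw [bind_pure_comp, Sm_eq_foldr]
    simp only [List.map_eq_map, List.foldr_map]
    rfl
  have e2 : sFMN add mul μ f (m * k) n' = mul (ratNN c') (Sm add g' ((m * k) * n')) := by
    unfold sFMN
    rw [bind_pure_comp, Sm_eq_foldr]
    simp only [List.map_eq_map, List.foldr_map]
    rfl
  rw [e1, e2]
  have hkc' : ratNN ⟨(k : ℚ) * c'.1, mul_nonneg (by positivity) c'.2⟩ = ratNN c1 := by
    refine ratNN_eq ?_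
    show (k : ℚ) * (1 / ((m * k : ℕ) : ℚ)) = 1 / (m : ℚ)
    push_cast
    field_simp
  have hopen : ∀ i, i < k * (m * n) → h (i / k) ≤ g' i := by
    intro i _
    apply hμmono
    intro a
    have hnat : i + 1 ≤ (i / k + 1) * k := by
      have h1 := Nat.div_add_mod i k
      have h2 := Nat.mod_lt i hk
      nlinarith [Nat.div_add_mod i k]
    have hle : ((i : ℚ) + 1) / ((m * k : ℕ) : ℚ) ≤ (((i / k : ℕ) : ℚ) + 1) / (m : ℚ) := by
      rw [div_le_div_iff₀ (by push_cast; positivity) hm0]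
      have hnq : (i : ℚ) + 1 ≤ (((i / k : ℕ) : ℚ) + 1) * (k : ℚ) := by exact_mod_cast hnat
      push_cast
      nlinarith [hnq, hm0.le]
    intro hcut
    rcases eq_or_lt_of_le hle with heq | hlt
    · rw [← heq] at hcut; exact hcut
    · exact (f a).1.lower _ _ hlt hcut
  calc mul (ratNN c1) (Sm add h (m * n))
      ≤ Sm add (fun j => mul (ratNN c1) (h j)) (m * n) := Sm_mul_le hadd hmul c1 h (m * n)
    _ = Sm add (fun j => mul (ratNN ⟨(k : ℚ) * c'.1, mul_nonneg (by positivity) c'.2⟩)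
          (h j)) (m * n) := by rw [hkc']
    _ ≤ Sm add (fun i => mul (ratNN c') (h (i / k))) (k * (m * n)) :=
        Sm_group hadd hmul c' hk (m * n) h
    _ ≤ Sm add (fun i => mul (ratNN c') (g' i)) (k * (m * n)) :=
        Sm_mono_fn hadd (fun i hi => mul_mono_right hmul _ (hopen i hi))
    _ ≤ mul (ratNN c') (Sm add g' (k * (m * n))) := Sm_mul_ge hadd hmul c' g' (k * (m * n))
    _ ≤ mul (ratNN c') (Sm add g' ((m * k) * n')) := by
        refine mul_mono_right hmul _ (Sm_mono_len hadd g' ?_)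
        calc k * (m * n) = (m * k) * n := by ring
          _ ≤ (m * k) * n' := Nat.mul_le_mul_left _ hn

/-- if `m ∣ m'` and `n ≤ n'` (all positive), then
`s_{f,m,n} ≤ s_{f,m',n'}`; consequently the family `(s_{f,m,n})_{m,n ≥ 1}` is
directed. -/
theorem sFMN_monotone_and_directed {A : Type}
    (add mul : NNLowerReal → NNLowerReal → NNLowerReal)
    (hadd : AddSpecNN add) (hmul : MulSpecNN mul)
    (μ : (A → Sierp) → NNLowerReal) (hμ : IsValuation add μ)
    (f : A → NNLowerReal) :
    (∀ m m' n n' : ℕ, 0 < m → 0 < m' → 0 < n → 0 < n' → m ∣ m' → n ≤ n' →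
        sFMN add mul μ f m n ≤ sFMN add mul μ f m' n') ∧
      (∀ m n m' n' : ℕ, 0 < m → 0 < n → 0 < m' → 0 < n' →
        ∃ M N : ℕ, 0 < M ∧ 0 < N ∧
          sFMN add mul μ f m n ≤ sFMN add mul μ f M N ∧
          sFMN add mul μ f m' n' ≤ sFMN add mul μ f M N) := by
  have hmono : ∀ m m' n n' : ℕ, 0 < m → 0 < m' → 0 < n → 0 < n' → m ∣ m' → n ≤ n' →
      sFMN add mul μ f m n ≤ sFMN add mul μ f m' n' := by
    intro m m' n n' hm hm' hn hn' hdvd hle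
    obtain ⟨k, rfl⟩ := hdvd
    have hk : 0 < k := by
      rcases Nat.eq_zero_or_pos k with rfl | h
      · simp at hm'
      · exact h
    exact sFMN_main_mono hadd hmul hμ.1.1 f hm hk hle
  refine ⟨hmono, ?_⟩
  intro m n m' n' hm hn hm' hn'
  have hN : 0 < max n n' := lt_of_lt_of_le hn (le_max_left n n')
  exact ⟨m * m', max n n', Nat.mul_pos hm hm', hN,
    hmono m (m * m') n (max n n') hm (Nat.mul_pos hm hm') hn hN (dvd_mul_right m m')
      (le_max_left n n'),
    hmono m' (m * m') n' (max n n') hm' (Nat.mul_pos hm hm') hn' hN (dvd_mul_left m' m)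
      (le_max_right n n')⟩
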